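/- Let X, Y be Banach spaces, Ω ⊆ X an open set, f : Ω → Y an analytic function, x₀ ∈ Ω and λ > 0. Suppose γ := sup_{n ≥ 2} ‖(λ/n!)·f⁽ⁿ⁾(x₀)‖^{1/(n−1)} < +∞ and B(x₀, 1/γ) ⊆ Ω. Then for all x ∈ B(x₀, 1/γ) it holds that λ‖f″(x)‖ ≤ 2γ/(1 − γ‖x − x₀‖)³. -/

import Mathlib

open Metric Set Filter FormalMultilinearSeries
open scoped ENNReal NNReal

set_option maxHeartbeats 2000000

lemma aux_derivSeries_norm_le {E F : Type*} [NormedAddCommGroup E] [NormedSpace ℝ E]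
    [NormedAddCommGroup F] [NormedSpace ℝ F]
    (p : FormalMultilinearSeries ℝ E F) (n : ℕ) :
    ‖p.derivSeries n‖ ≤ (n + 1) * ‖p (1 + n)‖ := by
  have h1 : ‖p.derivSeries n‖ ≤ 1 * ‖p.changeOriginSeries 1 n‖ := by
    apply (ContinuousLinearMap.norm_compContinuousMultilinearMap_le _ _).trans
    apply mul_le_mul_of_nonneg_right _ (norm_nonneg _)
    exact ContinuousLinearMap.opNorm_le_bound _ zero_le_one (by simp)
  rw [one_mul] at h1
  refine h1.trans ?_
  have h2 : ‖p.changeOriginSeries 1 n‖ ≤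
      (Fintype.card { s : Finset (Fin (1 + n)) // s.card = n } : ℝ) * ‖p (1 + n)‖ := by
    rw [changeOriginSeries]
    refine (norm_sum_le Finset.univ
      (fun s : { s : Finset (Fin (1 + n)) // s.card = n } =>
        p.changeOriginSeriesTerm 1 n s.1 s.2)).trans ?_
    rw [Finset.sum_congr rfl (fun s _ => p.norm_changeOriginSeriesTerm 1 n s.1 s.2),
      Finset.sum_const, Finset.card_univ, nsmul_eq_mul]
  refine h2.trans ?_
  have h3 : Fintype.card { s : Finset (Fin (1 + n)) // s.card = n } = n + 1 := by
    rw [Fintype.card_finset_len, Fintype.card_fin]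
    rw [Nat.add_comm 1 n, Nat.choose_succ_self_right]
  rw [h3]
  push_cast
  exact le_refl _



/-- Lemma `lem.cond1`: if `f` is analytic on `Ω` and
`γ = sup_{n ≥ 2} ‖(λ/n!) f⁽ⁿ⁾(x₀)‖^{1/(n-1)} < ∞`, then
`λ‖f″(x)‖ ≤ 2γ/(1 - γ‖x - x₀‖)³` on `B(x₀, 1/γ)`. -/
theorem stmt18
    {X Y : Type*} [NormedAddCommGroup X] [NormedSpace ℝ X] [CompleteSpace X]
    [NormedAddCommGroup Y] [NormedSpace ℝ Y] [CompleteSpace Y]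
    (Ω : Set X) (hΩ : IsOpen Ω)
    (f : X → Y) (hf : AnalyticOnNhd ℝ f Ω)
    (x₀ : X) (hx₀ : x₀ ∈ Ω)
    (lam : ℝ) (hlam : 0 < lam)
    (γ : ℝ) (hγpos : 0 < γ)
    (hγ : IsLUB {r : ℝ | ∃ m : ℕ, 2 ≤ m ∧
      r = ‖(lam / (m.factorial : ℝ)) • iteratedFDeriv ℝ m f x₀‖ ^ ((1:ℝ) / ((m:ℝ) - 1))} γ)
    (hball : ball x₀ (1 / γ) ⊆ Ω) :
    ∀ x ∈ ball x₀ (1 / γ),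
      lam * ‖iteratedFDeriv ℝ 2 f x‖ ≤ 2 * γ / (1 - γ * ‖x - x₀‖) ^ 3 := by
  intro x hx
  -- the candidate power series
  set q : FormalMultilinearSeries ℝ X Y :=
    fun n => ((n.factorial : ℝ))⁻¹ • iteratedFDeriv ℝ n f x₀ with hq_def
  -- coefficient bound
  have hqnorm : ∀ m : ℕ, 2 ≤ m → ‖q m‖ ≤ γ ^ (m - 1) / lam := by
    intro m hm
    have hub : ‖(lam / (m.factorial : ℝ)) • iteratedFDeriv ℝ m f x₀‖ ^ ((1:ℝ) / ((m:ℝ) - 1)) ≤ γ :=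
      hγ.1 ⟨m, hm, rfl⟩
    set a : ℝ := ‖(lam / (m.factorial : ℝ)) • iteratedFDeriv ℝ m f x₀‖ with ha_def
    have ha0 : 0 ≤ a := norm_nonneg _
    have hm1 : (0:ℝ) < (m:ℝ) - 1 := by
      have : (2:ℝ) ≤ (m:ℝ) := by exact_mod_cast hm
      linarith
    have hcast : ((m - 1 : ℕ) : ℝ) = (m:ℝ) - 1 := by
      have h1m : 1 ≤ m := by omega
      push_cast [h1m]
      ring
    have key : a ≤ γ ^ (m - 1) := by
      have h1 : (a ^ ((1:ℝ) / ((m:ℝ) - 1))) ^ ((m:ℝ) - 1) ≤ γ ^ ((m:ℝ) - 1) :=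
        Real.rpow_le_rpow (Real.rpow_nonneg ha0 _) hub hm1.le
      rw [← Real.rpow_natCast γ (m-1), hcast]
      rwa [← Real.rpow_mul ha0, one_div, inv_mul_cancel₀ hm1.ne', Real.rpow_one] at h1
    have haq : a = lam * ‖q m‖ := by
      have hsm : (lam / (m.factorial : ℝ)) • iteratedFDeriv ℝ m f x₀ = lam • q m := by
        simp only [hq_def, smul_smul, div_eq_mul_inv]
      rw [ha_def, hsm, norm_smul lam (q m), Real.norm_of_nonneg hlam.le]
    rw [haq] at key
    rw [le_div_iff₀ hlam]
    linarith [key]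
  have hnq : ∀ k l : ℕ, k = l → ‖q k‖ = ‖q l‖ := by
    rintro k l rfl; rfl
  -- radius of q is at least 1/γ
  have hrad : ENNReal.ofReal (1 / γ) ≤ q.radius := by
    refine ENNReal.le_of_forall_nnreal_lt fun r hr => ?_
    have hrlt : (r : ℝ) < 1 / γ := by
      have h1 : ((r : ℝ≥0∞)).toReal < (ENNReal.ofReal (1 / γ)).toReal :=
        ENNReal.toReal_strict_mono (by simp) hr
      rwa [ENNReal.coe_toReal, ENNReal.toReal_ofReal (by positivity)] at h1
    have hγr : γ * (r : ℝ) < 1 := by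
      have := (lt_div_iff₀ hγpos).mp hrlt
      linarith
    have hr0 : (0:ℝ) ≤ (r:ℝ) := r.2
    apply q.le_radius_of_bound (max (max ‖q 0‖ (‖q 1‖ * r)) ((r:ℝ) / lam))
    intro n
    match n with
    | 0 => simpa using le_max_of_le_left (le_max_left _ _)
    | 1 => simpa using le_max_of_le_left (le_max_right _ _)
    | (n+2) =>
      refine le_max_of_le_right ?_
      have h1 : ‖q (n+2)‖ * (r:ℝ)^(n+2) ≤ (γ^(n+1)/lam) * (r:ℝ)^(n+2) := by
        gcongr
        simpa using hqnorm (n+2) (by omega)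
      refine h1.trans ?_
      have h2 : (γ^(n+1)/lam) * (r:ℝ)^(n+2) = ((γ*(r:ℝ))^(n+1) * (r:ℝ)) / lam := by
        rw [mul_pow]; ring
      rw [h2]
      have h3 : (γ*(r:ℝ))^(n+1) ≤ 1 := pow_le_one₀ (by positivity) hγr.le
      calc (γ*(r:ℝ))^(n+1) * (r:ℝ) / lam ≤ 1 * (r:ℝ) / lam := by gcongr
        _ = (r:ℝ) / lam := by ring
  set R := ENNReal.ofReal (1 / γ) with hR_def
  have hRpos : 0 < R := ENNReal.ofReal_pos.2 (by positivity)
  obtain ⟨p₀, hp₀at⟩ := hf x₀ hx₀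
  obtain ⟨r₀, hp₀⟩ := hp₀at
  have hdiag : ∀ (n : ℕ) (v : X), q n (fun _ => v) = p₀ n (fun _ => v) := by
    intro n v
    have h := hp₀.factorial_smul v n
    have h2 : q n (fun _ => v) = (n.factorial : ℝ)⁻¹ • (iteratedFDeriv ℝ n f x₀ (fun _ => v)) := rfl
    rw [h2, ← h, ← Nat.cast_smul_eq_nsmul ℝ, smul_smul,
      inv_mul_cancel₀ (by exact_mod_cast n.factorial_ne_zero), one_smul]
  have hfq : HasFPowerSeriesOnBall f q x₀ (min r₀ R) :=
    { r_le := le_trans (min_le_right _ _) hrad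
      r_pos := lt_min hp₀.r_pos hRpos
      hasSum := by
        intro v hv
        have hv' : v ∈ EMetric.ball (0:X) r₀ := EMetric.ball_subset_ball (min_le_left _ _) hv
        have := hp₀.hasSum hv'
        exact (funext fun n => hdiag n v) ▸ this }
  set g : X → Y := fun z => q.sum (z - x₀) with hg_def
  have hgball : HasFPowerSeriesOnBall g q x₀ R :=
    { r_le := hrad
      r_pos := hRpos
      hasSum := by
        intro v hv
        have hv' : v ∈ EMetric.ball (0:X) q.radius :=
          EMetric.ball_subset_ball hrad hv
        simpa [hg_def] using q.hasSum hv' }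
  have hmemE : ∀ z ∈ ball x₀ (1/γ), z ∈ Metric.eball x₀ R := by
    intro z hz
    rw [EMetric.mem_ball, edist_dist, hR_def]
    exact ENNReal.ofReal_lt_ofReal_iff (by positivity) |>.2 (mem_ball.mp hz)
  have hgan : AnalyticOnNhd ℝ g (ball x₀ (1/γ)) := fun z hz =>
    hgball.analyticOnNhd z (hmemE z hz)
  have hfan : AnalyticOnNhd ℝ f (ball x₀ (1/γ)) := fun z hz => hf z (hball hz)
  have hev : f =ᶠ[nhds x₀] g := by
    filter_upwards [EMetric.ball_mem_nhds x₀ hfq.r_pos] with z hz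
    have hz' : z - x₀ ∈ Metric.eball (0:X) (min r₀ R) := by
      rw [EMetric.mem_ball, edist_zero_right]
      rwa [EMetric.mem_ball, edist_eq_enorm_sub] at hz
    have hzz := hfq.sum hz'
    rw [show x₀ + (z - x₀) = z by abel] at hzz
    simpa [hg_def] using hzz
  have hEq : EqOn f g (ball x₀ (1/γ)) :=
    hfan.eqOn_of_preconnected_of_eventuallyEq hgan
      (convex_ball x₀ (1/γ)).isPreconnected (mem_ball_self (by positivity)) hev
  have hevx : f =ᶠ[nhds x] g := hEq.eventuallyEq_of_mem (isOpen_ball.mem_nhds hx)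
  have hD2 : fderiv ℝ (fderiv ℝ f) x = fderiv ℝ (fderiv ℝ g) x :=
    (Filter.EventuallyEq.fderiv (𝕜 := ℝ) hevx).fderiv_eq
  -- power series of the second derivative of g
  have h2ball := (hgball.fderiv).fderiv
  have hymem : x - x₀ ∈ Metric.eball (0:X) R := by
    rw [EMetric.mem_ball, edist_eq_enorm_sub, sub_zero]
    have : x ∈ Metric.eball x₀ R := hmemE x hx
    rwa [EMetric.mem_ball, edist_eq_enorm_sub] at this
  have hS := h2ball.hasSum hymem
  rw [show x₀ + (x - x₀) = x by abel] at hS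
  set t := ‖x - x₀‖ with ht_def
  have ht0 : 0 ≤ t := norm_nonneg _
  have hta : γ * t < 1 := by
    have : t < 1/γ := by rwa [mem_ball_iff_norm] at hx
    have := (lt_div_iff₀ hγpos).mp this
    linarith
  have h1t : 0 < 1 - γ * t := by linarith
  -- term-wise bound
  have hterm : ∀ n : ℕ, ‖q.derivSeries.derivSeries n (fun _ => x - x₀)‖ ≤
      2*γ/lam * ((((n+2).choose 2 : ℕ) : ℝ) * (γ*t)^n) := by
    intro n
    have e1 : ‖q.derivSeries.derivSeries n (fun _ => x - x₀)‖ ≤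
        ‖q.derivSeries.derivSeries n‖ * t^n := by
      have h := ContinuousMultilinearMap.le_opNorm (q.derivSeries.derivSeries n) (fun _ => x - x₀)
      simpa using h
    have e2 : ‖q.derivSeries.derivSeries n‖ ≤ (n+1) * ‖q.derivSeries (1+n)‖ :=
      aux_derivSeries_norm_le _ n
    have e3 : ‖q.derivSeries (1+n)‖ ≤ ((1:ℝ)+n+1) * ‖q (1+(1+n))‖ := by
      have h := aux_derivSeries_norm_le q (1+n)
      push_cast at h
      exact h
    have heq : ‖q (1+(1+n))‖ = ‖q (n+2)‖ := hnq _ _ (by omega)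
    have e4 : ‖q (n+2)‖ ≤ γ^(n+1)/lam := by
      simpa using hqnorm (n+2) (by omega)
    calc ‖q.derivSeries.derivSeries n (fun _ => x - x₀)‖
        ≤ ‖q.derivSeries.derivSeries n‖ * t^n := e1
      _ ≤ ((n+1) * (((1:ℝ)+n+1) * ‖q (1+(1+n))‖)) * t^n := by
          gcongr
          exact e2.trans (by gcongr)
      _ = ((n+1) * ((n+2) * ‖q (n+2)‖)) * t^n := by
          rw [heq]; push_cast; ring
      _ ≤ ((n+1) * ((n+2) * (γ^(n+1)/lam))) * t^n := by
          have hpn : (0:ℝ) ≤ t^n := by positivity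
          gcongr
      _ = 2*γ/lam * ((((n+2).choose 2 : ℕ) : ℝ) * (γ*t)^n) := by
          rw [Nat.cast_choose_two]
          push_cast
          field_simp
          ring
  have hbnorm : ‖γ * t‖ < 1 := by
    rw [Real.norm_eq_abs, abs_of_nonneg (by positivity)]; exact hta
  have hSb : HasSum (fun n : ℕ => 2*γ/lam * ((((n+2).choose 2 : ℕ) : ℝ) * (γ*t)^n))
      (2*γ/lam * (1/(1-γ*t)^3)) := by
    have hb := hasSum_choose_mul_geometric_of_norm_lt_one (𝕜 := ℝ) 2 hbnorm
    exact hb.mul_left _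
  have hsum_norm : Summable (fun n => ‖q.derivSeries.derivSeries n (fun _ => x - x₀)‖) :=
    Summable.of_nonneg_of_le (fun n => norm_nonneg _) hterm hSb.summable
  set dd := fun n : ℕ => q.derivSeries.derivSeries n (fun _ => x - x₀) with hdd
  have hnorm2 : ‖fderiv ℝ (fderiv ℝ g) x‖ ≤ 2*γ/lam * (1/(1-γ*t)^3) := by
    have s1 : ‖fderiv ℝ (fderiv ℝ g) x‖ = ‖∑' n, dd n‖ := by rw [hS.tsum_eq]
    have s2 : ‖∑' n, dd n‖ ≤ ∑' n, ‖dd n‖ := norm_tsum_le_tsum_norm hsum_norm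
    have s3 : ∑' n, ‖dd n‖ ≤ ∑' n : ℕ, 2*γ/lam * ((((n+2).choose 2 : ℕ) : ℝ) * (γ*t)^n) :=
      Summable.tsum_le_tsum hterm hsum_norm hSb.summable
    rw [s1, ← hSb.tsum_eq]
    exact s2.trans s3
  have hit : ‖iteratedFDeriv ℝ 2 f x‖ ≤ ‖fderiv ℝ (fderiv ℝ f) x‖ := by
    apply ContinuousMultilinearMap.opNorm_le_bound (M := ‖fderiv ℝ (fderiv ℝ f) x‖) (ContinuousLinearMap.opNorm_nonneg _)
    intro m
    rw [iteratedFDeriv_two_apply]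
    calc ‖fderiv ℝ (fderiv ℝ f) x (m 0) (m 1)‖
        ≤ ‖fderiv ℝ (fderiv ℝ f) x (m 0)‖ * ‖m 1‖ := ContinuousLinearMap.le_opNorm _ _
      _ ≤ (‖fderiv ℝ (fderiv ℝ f) x‖ * ‖m 0‖) * ‖m 1‖ := by
          gcongr
          exact ContinuousLinearMap.le_opNorm _ _
      _ = ‖fderiv ℝ (fderiv ℝ f) x‖ * ∏ i, ‖m i‖ := by
          rw [Fin.prod_univ_two]; ring
  have hfinal : ‖iteratedFDeriv ℝ 2 f x‖ ≤ 2*γ/lam * (1/(1-γ*t)^3) := by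
    refine hit.trans ?_
    rw [hD2]
    exact hnorm2
  have hmul : lam * (2*γ/lam * (1/(1-γ*t)^3)) = 2 * γ / (1 - γ * t)^3 := by
    field_simp
  calc lam * ‖iteratedFDeriv ℝ 2 f x‖ ≤ lam * (2*γ/lam * (1/(1-γ*t)^3)) := by
        exact mul_le_mul_of_nonneg_left hfinal hlam.le
    _ = 2 * γ / (1 - γ * t)^3 := hmul
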